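/- For a > 0 define v_a : ℝ → ℝ by v_a(x) = 2·arctan(x/a). Let n ≥ 1, let K, L ≥ 0 be natural numbers, let α > 0, ε ∈ {0,1}, a_1,…,a_K > 0 and b_1,…,b_L > 0, and let μ = (μ_1,…,μ_n) ∈ ℤ^n with μ_1 > μ_2 > … > μ_n > 0. Then there exists a unique ξ = (ξ_1,…,ξ_n) ∈ ℝ^n satisfying, for every j ∈ {1,…,n}, the system 2α ξ_j + Σ_{k=1}^K v_{a_k}(ξ_j) + Σ_{j′≠j} Σ_{l=1}^L ( v_{b_l}(ξ_{j′} + ξ_j) − v_{b_l}(ξ_{j′} − ξ_j) ) = 2π(μ_j + ε/2). Moreover this solution satisfies the rational Bethe equations of type B: for every j, exp(2i α ξ_j) = (−1)^ε · ∏_{k=1}^K (i a_k + ξ_j)/(i a_k − ξ_j) · ∏_{j′≠j} ∏_{l=1}^L ( (i b_l + ξ_j + ξ_{j′})/(i b_l − ξ_j − ξ_{j′}) ) · ( (i b_l + ξ_j − ξ_{j′})/(i b_l − ξ_j + ξ_{j′}) ) as identities of complex numbers. -/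

import Mathlib

open Real Finset

/-- The rational function `v_a(x) = 2 arctan(x/a)`. -/
noncomputable def vRat (a x : ℝ) : ℝ := 2 * Real.arctan (x / a)

/-- The rational type B Bethe critical-point system. -/
def ratBSysMu (n K L : ℕ) (α : ℝ) (ε : ℕ) (a : Fin K → ℝ) (b : Fin L → ℝ)
    (μ : Fin n → ℤ) (ξ : Fin n → ℝ) : Prop :=
  ∀ j : Fin n,
    2 * α * ξ j + (∑ k, vRat (a k) (ξ j)) +
    (∑ j' ∈ Finset.univ.erase j, ∑ l,
      (vRat (b l) (ξ j' + ξ j) - vRat (b l) (ξ j' - ξ j)))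
    = 2 * π * ((μ j : ℝ) + (ε : ℝ) / 2)


lemma vRat_odd (a x : ℝ) : vRat a (-x) = - vRat a x := by
  simp [vRat, neg_div, Real.arctan_neg]

lemma vRat_mono (a : ℝ) (ha : 0 < a) : Monotone (vRat a) := by
  intro x y h
  have h2 : x / a ≤ y / a := by gcongr
  have := Real.arctan_strictMono.monotone h2
  unfold vRat; linarith

lemma vRat_mul_nonneg {a : ℝ} (ha : 0 < a) (x y : ℝ) :
    0 ≤ (vRat a x - vRat a y) * (x - y) := by
  rcases le_total x y with h | h
  · have := vRat_mono a ha h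
    have h1 : vRat a x - vRat a y ≤ 0 := by linarith
    have h2 : x - y ≤ 0 := by linarith
    have h3 := mul_nonneg (neg_nonneg.2 h1) (neg_nonneg.2 h2)
    nlinarith [h3]
  · have := vRat_mono a ha h
    apply mul_nonneg <;> linarith

lemma vRat_nonneg {a : ℝ} (ha : 0 < a) {x : ℝ} (hx : 0 ≤ x) : 0 ≤ vRat a x := by
  have := vRat_mono a ha hx
  simpa [vRat] using this

noncomputable def WR (a x : ℝ) : ℝ :=
  2 * x * Real.arctan (x / a) - a * Real.log (1 + (x / a) ^ 2)

lemma WR_even (a x : ℝ) : WR a (-x) = WR a x := by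
  simp [WR, neg_div, Real.arctan_neg]

lemma one_add_sq_pos (y : ℝ) : (0:ℝ) < 1 + y ^ 2 := by positivity

lemma WR_hasDerivAt {a : ℝ} (ha : 0 < a) (x : ℝ) :
    HasDerivAt (WR a) (vRat a x) x := by
  have ha' : a ≠ 0 := ne_of_gt ha
  have h1 : HasDerivAt (fun x : ℝ => x / a) (1 / a) x := by
    simpa using (hasDerivAt_id x).div_const a
  have harc : HasDerivAt (fun x : ℝ => Real.arctan (x / a))
      ((1 / (1 + (x / a) ^ 2)) * (1 / a)) x :=
    by have := (Real.hasDerivAt_arctan (x / a)).comp x h1; exact this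
  have hmul : HasDerivAt (fun x : ℝ => 2 * x * Real.arctan (x / a))
      (2 * Real.arctan (x / a) + 2 * x * ((1 / (1 + (x / a) ^ 2)) * (1 / a))) x := by
    have := ((hasDerivAt_id x).const_mul 2).mul harc
    refine this.congr_deriv ?_
    simp only [id]; ring
  have hinner : HasDerivAt (fun x : ℝ => 1 + (x / a) ^ 2)
      (2 * (x / a) * (1 / a)) x := by
    have := ((h1.pow 2).const_add 1)
    refine this.congr_deriv ?_; ring
  have hlog : HasDerivAt (fun x : ℝ => a * Real.log (1 + (x / a) ^ 2))
      (a * ((2 * (x / a) * (1 / a)) / (1 + (x / a) ^ 2))) x := by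
    exact ((hinner.log (ne_of_gt (one_add_sq_pos _))).const_mul a)
  have := hmul.sub hlog
  refine this.congr_deriv ?_
  unfold vRat
  have hne : 1 + (x / a) ^ 2 ≠ 0 := ne_of_gt (one_add_sq_pos _)
  field_simp
  ring

lemma WR_continuous {a : ℝ} (ha : 0 < a) : Continuous (WR a) := by
  rw [continuous_iff_continuousAt]
  exact fun x => (WR_hasDerivAt ha x).continuousAt

lemma WR_zero (a : ℝ) : WR a 0 = 0 := by simp [WR]

lemma WR_nonneg {a : ℝ} (ha : 0 < a) (x : ℝ) : 0 ≤ WR a x := by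
  have key : ∀ y : ℝ, 0 ≤ y → 0 ≤ WR a y := by
    intro y hy
    have hmono : MonotoneOn (WR a) (Set.Ici 0) := by
      apply monotoneOn_of_deriv_nonneg (convex_Ici 0)
        (WR_continuous ha).continuousOn
        (fun z _ => (WR_hasDerivAt ha z).differentiableAt.differentiableWithinAt)
      intro z hz
      rw [(WR_hasDerivAt ha z).deriv]
      have : (0:ℝ) ≤ z := le_of_lt (by simpa using hz)
      exact vRat_nonneg ha this
    have := hmono (Set.self_mem_Ici) (Set.mem_Ici.2 hy) hy
    simpa [WR_zero] using this
  rcases le_total 0 x with h | h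
  · exact key x h
  · rw [← WR_even]; exact key (-x) (by linarith)

lemma exp_neg_vRat {a : ℝ} (ha : 0 < a) (x : ℝ) :
    Complex.exp (-((vRat a x : ℝ) : ℂ) * Complex.I) =
      (Complex.I * a + x) / (Complex.I * a - x) := by
  have ha' : a ≠ 0 := ne_of_gt ha
  set y := x / a with hy
  have h1 : (0:ℝ) < 1 + y ^ 2 := one_add_sq_pos y
  have hsq : Real.sqrt (1 + y ^ 2) ^ 2 = 1 + y ^ 2 := Real.sq_sqrt h1.le
  have hc : Real.cos (vRat a x) = (1 - y ^ 2) / (1 + y ^ 2) := by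
    rw [vRat, two_mul, ← hy, Real.cos_add, Real.cos_arctan, Real.sin_arctan]
    rw [div_mul_div_comm, div_mul_div_comm, ← Real.sq_sqrt h1.le]
    field_simp
    simp only [hsq]
  have hs : Real.sin (vRat a x) = 2 * y / (1 + y ^ 2) := by
    rw [vRat, two_mul, ← hy, Real.sin_add, Real.cos_arctan, Real.sin_arctan]
    rw [div_mul_div_comm, div_mul_div_comm, ← Real.sq_sqrt h1.le]
    field_simp
    simp only [hsq]
    ring
  have hne : (Complex.I * a - x) ≠ 0 := by
    intro h
    have := congrArg Complex.im h
    simp at this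
    exact ha' this
  have h1c : ((1:ℂ) + (y:ℂ) ^ 2) ≠ 0 := by
    have : ((1:ℂ) + (y:ℂ) ^ 2) = ((1 + y ^ 2 : ℝ) : ℂ) := by push_cast; ring
    rw [this]
    exact_mod_cast ne_of_gt h1
  rw [Complex.exp_mul_I, Complex.cos_neg, Complex.sin_neg,
    ← Complex.ofReal_cos, ← Complex.ofReal_sin, hc, hs]
  have hane : (a:ℂ) ≠ 0 := by exact_mod_cast ha'
  push_cast
  rw [hy]
  push_cast
  have hyc : ((x:ℂ)/(a:ℂ)) = ((y:ℝ):ℂ) := by rw [hy]; push_cast; ring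
  have h1c' : ((1:ℂ) + ((x:ℂ)/(a:ℂ))^2) ≠ 0 := by rw [hyc]; exact h1c
  have h2 : ((a:ℂ)^2 + (x:ℂ)^2) ≠ 0 := by
    have h3 : ((a:ℂ)^2 + (x:ℂ)^2) = ((1:ℂ) + ((x:ℂ)/(a:ℂ))^2) * (a:ℂ)^2 := by
      field_simp
    rw [h3]
    exact mul_ne_zero h1c' (pow_ne_zero 2 hane)
  have hne2 : (a:ℂ) * Complex.I - x ≠ 0 := by rw [mul_comm]; exact hne
  field_simp
  linear_combination (-2*(x:ℂ)*(a:ℂ)^2) * Complex.I_sq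

noncomputable def VB {n K L : ℕ} (α : ℝ) (c : Fin n → ℝ) (a : Fin K → ℝ)
    (b : Fin L → ℝ) (ξ : Fin n → ℝ) : ℝ :=
  (∑ j, (α * ξ j ^ 2 - c j * ξ j + ∑ k, WR (a k) (ξ j)))
  + (1/2) * ∑ j, ∑ j' ∈ Finset.univ.erase j, ∑ l,
      (WR (b l) (ξ j + ξ j') + WR (b l) (ξ j - ξ j'))

lemma VB_hasDerivAt {n K L : ℕ} (α : ℝ) (c : Fin n → ℝ) {a : Fin K → ℝ}
    {b : Fin L → ℝ} (ha : ∀ k, 0 < a k) (hb : ∀ l, 0 < b l)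
    (ξ : Fin n → ℝ) (j : Fin n) :
    HasDerivAt (fun t => VB α c a b (Function.update ξ j t))
      (2 * α * ξ j + (∑ k, vRat (a k) (ξ j)) +
        (∑ j' ∈ Finset.univ.erase j, ∑ l,
          (vRat (b l) (ξ j' + ξ j) - vRat (b l) (ξ j' - ξ j))) - c j) (ξ j) := by
  have h1 : HasDerivAt
      (fun t => ∑ p, (α * (Function.update ξ j t p) ^ 2
          - c p * (Function.update ξ j t p) + ∑ k, WR (a k) (Function.update ξ j t p)))
      (∑ p, if p = j then (2 * α * ξ j - c j + ∑ k, vRat (a k) (ξ j)) else 0) (ξ j) := by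
    apply HasDerivAt.fun_sum
    intro p _
    by_cases hp : p = j
    · subst hp
      rw [if_pos rfl]
      have heq : (fun t => α * (Function.update ξ p t p) ^ 2
          - c p * (Function.update ξ p t p) + ∑ k, WR (a k) (Function.update ξ p t p))
          = fun t => α * t ^ 2 - c p * t + ∑ k, WR (a k) t := by
        funext t; rw [Function.update_self]
      rw [heq]
      have hsum : HasDerivAt (fun t => ∑ k, WR (a k) t) (∑ k, vRat (a k) (ξ p)) (ξ p) :=
        HasDerivAt.fun_sum (fun k _ => WR_hasDerivAt (ha k) (ξ p))
      have hd := (((hasDerivAt_pow 2 (ξ p)).const_mul α).sub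
          ((hasDerivAt_id (ξ p)).const_mul (c p))).add hsum
      refine hd.congr_deriv ?_
      simp [vRat]
      ring
    · rw [if_neg hp]
      have heq : (fun t => α * (Function.update ξ j t p) ^ 2
          - c p * (Function.update ξ j t p) + ∑ k, WR (a k) (Function.update ξ j t p))
          = fun _ => α * (ξ p) ^ 2 - c p * (ξ p) + ∑ k, WR (a k) (ξ p) := by
        funext t; rw [Function.update_of_ne hp]
      rw [heq]
      exact hasDerivAt_const _ _
  have h2 : HasDerivAt
      (fun t => ∑ p, ∑ p' ∈ Finset.univ.erase p, ∑ l,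
        (WR (b l) (Function.update ξ j t p + Function.update ξ j t p')
          + WR (b l) (Function.update ξ j t p - Function.update ξ j t p')))
      (∑ p, ∑ p' ∈ Finset.univ.erase p, ∑ l,
        (if p = j then (vRat (b l) (ξ j + ξ p') + vRat (b l) (ξ j - ξ p'))
         else if p' = j then (vRat (b l) (ξ p + ξ j) - vRat (b l) (ξ p - ξ j))
         else 0)) (ξ j) := by
    apply HasDerivAt.fun_sum; intro p _
    apply HasDerivAt.fun_sum; intro p' hp'
    apply HasDerivAt.fun_sum; intro l _
    have hpp' : p' ≠ p := (Finset.mem_erase.1 hp').1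
    by_cases hp : p = j
    · subst hp
      rw [if_pos rfl]
      have heq : (fun t => WR (b l) (Function.update ξ p t p + Function.update ξ p t p')
          + WR (b l) (Function.update ξ p t p - Function.update ξ p t p'))
          = fun t => WR (b l) (t + ξ p') + WR (b l) (t - ξ p') := by
        funext t; rw [Function.update_self, Function.update_of_ne hpp']
      rw [heq]
      have d1 : HasDerivAt (fun t => WR (b l) (t + ξ p')) (vRat (b l) (ξ p + ξ p')) (ξ p) := by
        have := (WR_hasDerivAt (hb l) (ξ p + ξ p')).comp (ξ p)
          ((hasDerivAt_id (ξ p)).add_const (ξ p'))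
        simpa [Function.comp_def] using this
      have d2 : HasDerivAt (fun t => WR (b l) (t - ξ p')) (vRat (b l) (ξ p - ξ p')) (ξ p) := by
        have := (WR_hasDerivAt (hb l) (ξ p - ξ p')).comp (ξ p)
          ((hasDerivAt_id (ξ p)).sub_const (ξ p'))
        simpa [Function.comp_def] using this
      exact d1.add d2
    · rw [if_neg hp]
      by_cases hq : p' = j
      · subst hq
        rw [if_pos rfl]
        have heq : (fun t => WR (b l) (Function.update ξ p' t p + Function.update ξ p' t p')
            + WR (b l) (Function.update ξ p' t p - Function.update ξ p' t p'))
            = fun t => WR (b l) (ξ p + t) + WR (b l) (ξ p - t) := by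
          funext t; rw [Function.update_self, Function.update_of_ne hp]
        rw [heq]
        have d1 : HasDerivAt (fun t => WR (b l) (ξ p + t)) (vRat (b l) (ξ p + ξ p')) (ξ p') := by
          have := (WR_hasDerivAt (hb l) (ξ p + ξ p')).comp (ξ p')
            ((hasDerivAt_id (ξ p')).const_add (ξ p))
          simpa [Function.comp_def] using this
        have d2 : HasDerivAt (fun t => WR (b l) (ξ p - t)) (-vRat (b l) (ξ p - ξ p')) (ξ p') := by
          have := (WR_hasDerivAt (hb l) (ξ p - ξ p')).comp (ξ p')
            ((hasDerivAt_id (ξ p')).const_sub (ξ p))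
          simpa [Function.comp_def] using this
        have h3 := d1.add d2
        refine h3.congr_deriv ?_; ring
      · rw [if_neg hq]
        have heq : (fun t => WR (b l) (Function.update ξ j t p + Function.update ξ j t p')
            + WR (b l) (Function.update ξ j t p - Function.update ξ j t p'))
            = fun _ => WR (b l) (ξ p + ξ p') + WR (b l) (ξ p - ξ p') := by
          funext t; rw [Function.update_of_ne hp, Function.update_of_ne hq]
        rw [heq]
        exact hasDerivAt_const _ _
  have htot := h1.add (h2.const_mul (1/2 : ℝ))
  have hD2 : (∑ p, ∑ p' ∈ Finset.univ.erase p, ∑ l,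
        (if p = j then (vRat (b l) (ξ j + ξ p') + vRat (b l) (ξ j - ξ p'))
         else if p' = j then (vRat (b l) (ξ p + ξ j) - vRat (b l) (ξ p - ξ j))
         else 0))
      = 2 * ∑ j' ∈ Finset.univ.erase j, ∑ l,
          (vRat (b l) (ξ j' + ξ j) - vRat (b l) (ξ j' - ξ j)) := by
    rw [← Finset.add_sum_erase _ _ (Finset.mem_univ j)]
    have hS1 : (∑ p' ∈ Finset.univ.erase j, ∑ l,
        (if j = j then (vRat (b l) (ξ j + ξ p') + vRat (b l) (ξ j - ξ p'))
         else if p' = j then (vRat (b l) (ξ j + ξ j) - vRat (b l) (ξ j - ξ j))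
         else 0))
        = ∑ j' ∈ Finset.univ.erase j, ∑ l,
          (vRat (b l) (ξ j' + ξ j) - vRat (b l) (ξ j' - ξ j)) := by
      apply Finset.sum_congr rfl; intro q _
      apply Finset.sum_congr rfl; intro l _
      rw [if_pos rfl, add_comm (ξ j) (ξ q),
        show ξ j - ξ q = -(ξ q - ξ j) by ring, vRat_odd]
      ring
    have hS2 : (∑ p ∈ Finset.univ.erase j, ∑ p' ∈ Finset.univ.erase p, ∑ l,
        (if p = j then (vRat (b l) (ξ j + ξ p') + vRat (b l) (ξ j - ξ p'))
         else if p' = j then (vRat (b l) (ξ p + ξ j) - vRat (b l) (ξ p - ξ j))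
         else 0))
        = ∑ j' ∈ Finset.univ.erase j, ∑ l,
          (vRat (b l) (ξ j' + ξ j) - vRat (b l) (ξ j' - ξ j)) := by
      apply Finset.sum_congr rfl; intro p hp
      have hpj : p ≠ j := (Finset.mem_erase.1 hp).1
      have step1 : ∀ p' ∈ Finset.univ.erase p, (∑ l,
          (if p = j then (vRat (b l) (ξ j + ξ p') + vRat (b l) (ξ j - ξ p'))
           else if p' = j then (vRat (b l) (ξ p + ξ j) - vRat (b l) (ξ p - ξ j))
           else 0))
          = (if p' = j then ∑ l, (vRat (b l) (ξ p + ξ j) - vRat (b l) (ξ p - ξ j)) else 0) := by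
        intro p' _
        simp only [if_neg hpj]
        split_ifs with h
        · rfl
        · simp
      rw [Finset.sum_congr rfl step1, Finset.sum_ite_eq' (Finset.univ.erase p) j
        (fun _ => ∑ l, (vRat (b l) (ξ p + ξ j) - vRat (b l) (ξ p - ξ j))),
        if_pos (Finset.mem_erase.2 ⟨Ne.symm hpj, Finset.mem_univ j⟩)]
    rw [hS1, hS2]; ring
  have hD1 : (∑ p, if p = j then (2 * α * ξ j - c j + ∑ k, vRat (a k) (ξ j)) else 0)
      = 2 * α * ξ j - c j + ∑ k, vRat (a k) (ξ j) := by
    rw [Finset.sum_ite_eq' Finset.univ j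
      (fun _ => 2 * α * ξ j - c j + ∑ k, vRat (a k) (ξ j)), if_pos (Finset.mem_univ j)]
  rw [hD1, hD2] at htot
  have hshape : (fun t => VB α c a b (Function.update ξ j t))
      = fun t => (∑ p, (α * (Function.update ξ j t p) ^ 2
          - c p * (Function.update ξ j t p) + ∑ k, WR (a k) (Function.update ξ j t p)))
        + (1/2) * ∑ p, ∑ p' ∈ Finset.univ.erase p, ∑ l,
            (WR (b l) (Function.update ξ j t p + Function.update ξ j t p')
              + WR (b l) (Function.update ξ j t p - Function.update ξ j t p')) := by
    funext t; rfl
  rw [hshape]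
  refine htot.congr_deriv ?_
  ring

lemma VB_continuous {n K L : ℕ} (α : ℝ) (c : Fin n → ℝ) {a : Fin K → ℝ}
    {b : Fin L → ℝ} (ha : ∀ k, 0 < a k) (hb : ∀ l, 0 < b l) :
    Continuous (VB α c a b) := by
  unfold VB
  apply Continuous.add
  · apply continuous_finset_sum
    intro j _
    exact ((continuous_const.mul ((continuous_apply j).pow 2)).sub
      (continuous_const.mul (continuous_apply j))).add
      (continuous_finset_sum _ fun k _ => (WR_continuous (ha k)).comp (continuous_apply j))
  · apply Continuous.mul continuous_const
    apply continuous_finset_sum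
    intro j _
    apply continuous_finset_sum
    intro j' _
    apply continuous_finset_sum
    intro l _
    exact ((WR_continuous (hb l)).comp ((continuous_apply j).add (continuous_apply j'))).add
      ((WR_continuous (hb l)).comp ((continuous_apply j).sub (continuous_apply j')))

lemma VB_lower_bound {n K L : ℕ} (hn : 1 ≤ n) {α : ℝ} (hα : 0 < α) (c : Fin n → ℝ)
    {a : Fin K → ℝ} {b : Fin L → ℝ} (ha : ∀ k, 0 < a k) (hb : ∀ l, 0 < b l)
    (ξ : Fin n → ℝ) :
    α * ‖ξ‖ ^ 2 - (∑ j, |c j|) * ‖ξ‖ ≤ VB α c a b ξ := by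
  have hne : (Finset.univ : Finset (Fin n)).Nonempty := by
    have : (0 : ℕ) < n := hn
    have := Fin.pos_iff_nonempty.mp this
    exact Finset.univ_nonempty
  obtain ⟨j0, _, hj0⟩ := Finset.exists_max_image Finset.univ (fun p => |ξ p|) hne
  have hnorm : ‖ξ‖ ≤ |ξ j0| := by
    apply (pi_norm_le_iff_of_nonneg (abs_nonneg _)).2
    intro i
    rw [Real.norm_eq_abs]
    exact hj0 i (Finset.mem_univ i)
  have hnsq : ‖ξ‖ ^ 2 ≤ ξ j0 ^ 2 := by
    rw [← sq_abs (ξ j0)]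
    exact pow_le_pow_left₀ (norm_nonneg _) hnorm 2
  have hpair : 0 ≤ (1/2 : ℝ) * ∑ j, ∑ j' ∈ Finset.univ.erase j, ∑ l,
      (WR (b l) (ξ j + ξ j') + WR (b l) (ξ j - ξ j')) := by
    apply mul_nonneg (by norm_num)
    apply Finset.sum_nonneg; intro j _
    apply Finset.sum_nonneg; intro j' _
    apply Finset.sum_nonneg; intro l _
    exact add_nonneg (WR_nonneg (hb l) _) (WR_nonneg (hb l) _)
  have hsingle : ∑ j, (α * ξ j ^ 2 - c j * ξ j + ∑ k, WR (a k) (ξ j))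
      ≥ α * ξ j0 ^ 2 - ∑ j, |c j| * ‖ξ‖ := by
    have h1 : ∀ j : Fin n, α * ξ j ^ 2 - c j * ξ j + ∑ k, WR (a k) (ξ j)
        ≥ α * ξ j ^ 2 - |c j| * ‖ξ‖ := by
      intro j
      have hW : 0 ≤ ∑ k, WR (a k) (ξ j) :=
        Finset.sum_nonneg fun k _ => WR_nonneg (ha k) _
      have hcj : c j * ξ j ≤ |c j| * ‖ξ‖ := by
        calc c j * ξ j ≤ |c j * ξ j| := le_abs_self _
        _ = |c j| * |ξ j| := abs_mul _ _
        _ ≤ |c j| * ‖ξ‖ := by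
            apply mul_le_mul_of_nonneg_left _ (abs_nonneg _)
            rw [← Real.norm_eq_abs]
            exact norm_le_pi_norm ξ j
      linarith
    calc ∑ j, (α * ξ j ^ 2 - c j * ξ j + ∑ k, WR (a k) (ξ j))
        ≥ ∑ j, (α * ξ j ^ 2 - |c j| * ‖ξ‖) := Finset.sum_le_sum (fun j _ => h1 j)
      _ = (∑ j, α * ξ j ^ 2) - ∑ j, |c j| * ‖ξ‖ := by rw [Finset.sum_sub_distrib]
      _ ≥ α * ξ j0 ^ 2 - ∑ j, |c j| * ‖ξ‖ := by
          have : α * ξ j0 ^ 2 ≤ ∑ j, α * ξ j ^ 2 :=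
            Finset.single_le_sum (f := fun j => α * ξ j ^ 2)
              (fun j _ => by positivity) (Finset.mem_univ j0)
          linarith
  have : α * ‖ξ‖ ^ 2 ≤ α * ξ j0 ^ 2 := by nlinarith
  unfold VB
  rw [show (∑ j, |c j|) * ‖ξ‖ = ∑ j, |c j| * ‖ξ‖ by rw [Finset.sum_mul]]
  linarith

lemma VB_exists_min {n K L : ℕ} (hn : 1 ≤ n) {α : ℝ} (hα : 0 < α) (c : Fin n → ℝ)
    {a : Fin K → ℝ} {b : Fin L → ℝ} (ha : ∀ k, 0 < a k) (hb : ∀ l, 0 < b l) :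
    ∃ ξ0 : Fin n → ℝ, ∀ ξ, VB α c a b ξ0 ≤ VB α c a b ξ := by
  apply (VB_continuous α c ha hb).exists_forall_le
  set C := ∑ j, |c j| with hC
  have h1 : Filter.Tendsto (fun r : ℝ => α * r ^ 2 - C * r) Filter.atTop Filter.atTop := by
    have h2 : Filter.Tendsto (fun r : ℝ => α * r - C) Filter.atTop Filter.atTop := by
      apply Filter.tendsto_atTop_add_const_right
      exact Filter.Tendsto.const_mul_atTop hα Filter.tendsto_id
    have h3 := Filter.Tendsto.atTop_mul_atTop₀ Filter.tendsto_id h2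
    apply h3.congr
    intro r
    simp only [id]
    ring
  have h4 : Filter.Tendsto (fun ξ : Fin n → ℝ => α * ‖ξ‖ ^ 2 - C * ‖ξ‖)
      (Filter.cocompact _) Filter.atTop := h1.comp tendsto_norm_cocompact_atTop
  exact Filter.tendsto_atTop_mono (fun ξ => VB_lower_bound hn hα c ha hb ξ) h4

lemma sum_erase_swap {n : ℕ} {M : Type*} [AddCommMonoid M] (f : Fin n → Fin n → M) :
    ∑ j, ∑ j' ∈ Finset.univ.erase j, f j j'
      = ∑ j, ∑ j' ∈ Finset.univ.erase j, f j' j := by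
  rw [Finset.sum_comm' (s' := fun y => Finset.univ.erase y) (t' := Finset.univ)]
  intro x y
  simp only [Finset.mem_univ, Finset.mem_erase, true_and, and_true]
  exact ne_comm

lemma ratB_unique_aux {n K L : ℕ} {α : ℝ} (hα : 0 < α)
    {a : Fin K → ℝ} {b : Fin L → ℝ} (ha : ∀ k, 0 < a k) (hb : ∀ l, 0 < b l)
    {c : Fin n → ℝ} {ξ η : Fin n → ℝ}
    (hξ : ∀ j, 2 * α * ξ j + (∑ k, vRat (a k) (ξ j)) +
      (∑ j' ∈ Finset.univ.erase j, ∑ l,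
        (vRat (b l) (ξ j' + ξ j) - vRat (b l) (ξ j' - ξ j))) = c j)
    (hη : ∀ j, 2 * α * η j + (∑ k, vRat (a k) (η j)) +
      (∑ j' ∈ Finset.univ.erase j, ∑ l,
        (vRat (b l) (η j' + η j) - vRat (b l) (η j' - η j))) = c j) :
    ξ = η := by
  have hsum : ∑ j, ((2 * α * ξ j + (∑ k, vRat (a k) (ξ j)) +
      (∑ j' ∈ Finset.univ.erase j, ∑ l,
        (vRat (b l) (ξ j' + ξ j) - vRat (b l) (ξ j' - ξ j))))
      - (2 * α * η j + (∑ k, vRat (a k) (η j)) +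
      (∑ j' ∈ Finset.univ.erase j, ∑ l,
        (vRat (b l) (η j' + η j) - vRat (b l) (η j' - η j))))) * (ξ j - η j) = 0 := by
    apply Finset.sum_eq_zero
    intro j _
    rw [hξ j, hη j]
    ring
  have hexp : ∑ j, ((2 * α * ξ j + (∑ k, vRat (a k) (ξ j)) +
      (∑ j' ∈ Finset.univ.erase j, ∑ l,
        (vRat (b l) (ξ j' + ξ j) - vRat (b l) (ξ j' - ξ j))))
      - (2 * α * η j + (∑ k, vRat (a k) (η j)) +
      (∑ j' ∈ Finset.univ.erase j, ∑ l,
        (vRat (b l) (η j' + η j) - vRat (b l) (η j' - η j))))) * (ξ j - η j)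
      = (∑ j, 2 * α * (ξ j - η j) ^ 2)
      + (∑ j, ∑ k, (vRat (a k) (ξ j) - vRat (a k) (η j)) * (ξ j - η j))
      + (∑ j, ∑ j' ∈ Finset.univ.erase j, ∑ l,
          (vRat (b l) (ξ j' + ξ j) - vRat (b l) (ξ j' - ξ j)
            - vRat (b l) (η j' + η j) + vRat (b l) (η j' - η j)) * (ξ j - η j)) := by
    rw [← Finset.sum_add_distrib, ← Finset.sum_add_distrib]
    apply Finset.sum_congr rfl
    intro j _
    have e1 : ∑ k, (vRat (a k) (ξ j) - vRat (a k) (η j)) * (ξ j - η j)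
        = ((∑ k, vRat (a k) (ξ j)) - (∑ k, vRat (a k) (η j))) * (ξ j - η j) := by
      rw [← Finset.sum_sub_distrib, Finset.sum_mul]
    have e2 : ∑ j' ∈ Finset.univ.erase j, ∑ l,
          (vRat (b l) (ξ j' + ξ j) - vRat (b l) (ξ j' - ξ j)
            - vRat (b l) (η j' + η j) + vRat (b l) (η j' - η j)) * (ξ j - η j)
        = ((∑ j' ∈ Finset.univ.erase j, ∑ l,
            (vRat (b l) (ξ j' + ξ j) - vRat (b l) (ξ j' - ξ j)))
          - (∑ j' ∈ Finset.univ.erase j, ∑ l,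
            (vRat (b l) (η j' + η j) - vRat (b l) (η j' - η j)))) * (ξ j - η j) := by
      rw [← Finset.sum_sub_distrib, Finset.sum_mul]
      apply Finset.sum_congr rfl
      intro j' _
      rw [← Finset.sum_sub_distrib, Finset.sum_mul]
      apply Finset.sum_congr rfl
      intro l _
      ring
    rw [e1, e2]
    ring
  rw [hexp] at hsum
  have hT2 : 0 ≤ ∑ j, ∑ k, (vRat (a k) (ξ j) - vRat (a k) (η j)) * (ξ j - η j) := by
    apply Finset.sum_nonneg; intro j _
    apply Finset.sum_nonneg; intro k _
    exact vRat_mul_nonneg (ha k) _ _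
  have hT3 : 0 ≤ ∑ j, ∑ j' ∈ Finset.univ.erase j, ∑ l,
      (vRat (b l) (ξ j' + ξ j) - vRat (b l) (ξ j' - ξ j)
        - vRat (b l) (η j' + η j) + vRat (b l) (η j' - η j)) * (ξ j - η j) := by
    set g : Fin n → Fin n → ℝ := fun j j' => ∑ l,
      (vRat (b l) (ξ j' + ξ j) - vRat (b l) (ξ j' - ξ j)
        - vRat (b l) (η j' + η j) + vRat (b l) (η j' - η j)) * (ξ j - η j) with hg
    have hpt : ∀ j j' : Fin n, 0 ≤ g j j' + g j' j := by
      intro j j'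
      rw [hg]
      rw [← Finset.sum_add_distrib]
      apply Finset.sum_nonneg
      intro l _
      have k1 := vRat_mul_nonneg (hb l) (ξ j' + ξ j) (η j' + η j)
      have k2 := vRat_mul_nonneg (hb l) (ξ j' - ξ j) (η j' - η j)
      rw [show ξ j - ξ j' = -(ξ j' - ξ j) by ring, show η j - η j' = -(η j' - η j) by ring,
        vRat_odd, vRat_odd, add_comm (ξ j) (ξ j'), add_comm (η j) (η j')]
      nlinarith [k1, k2]
    have hdbl : (∑ j, ∑ j' ∈ Finset.univ.erase j, g j j')
        + (∑ j, ∑ j' ∈ Finset.univ.erase j, g j j')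
        = ∑ j, ∑ j' ∈ Finset.univ.erase j, (g j j' + g j' j) := by
      nth_rewrite 2 [sum_erase_swap g]
      rw [← Finset.sum_add_distrib]
      apply Finset.sum_congr rfl
      intro j _
      rw [← Finset.sum_add_distrib]
    have h2 : 0 ≤ ∑ j, ∑ j' ∈ Finset.univ.erase j, (g j j' + g j' j) := by
      apply Finset.sum_nonneg; intro j _
      apply Finset.sum_nonneg; intro j' _
      exact hpt j j'
    have : ∑ j, ∑ j' ∈ Finset.univ.erase j, g j j'
        = ∑ j, ∑ j' ∈ Finset.univ.erase j, ∑ l,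
      (vRat (b l) (ξ j' + ξ j) - vRat (b l) (ξ j' - ξ j)
        - vRat (b l) (η j' + η j) + vRat (b l) (η j' - η j)) * (ξ j - η j) := rfl
    linarith [hdbl, h2, this]
  have hT1 : ∑ j, 2 * α * (ξ j - η j) ^ 2 ≤ 0 := by linarith
  have hzero : ∀ j ∈ Finset.univ, 2 * α * (ξ j - η j) ^ 2 = 0 := by
    apply (Finset.sum_eq_zero_iff_of_nonneg (fun j _ => by positivity)).1
    have h0 : 0 ≤ ∑ j, 2 * α * (ξ j - η j) ^ 2 :=
      Finset.sum_nonneg fun j _ => by positivity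
    linarith
  funext j
  have := hzero j (Finset.mem_univ j)
  have h2 : (ξ j - η j) ^ 2 = 0 := by
    have := mul_eq_zero.1 this
    rcases this with h | h
    · exfalso; nlinarith
    · exact h
  have := pow_eq_zero_iff (n := 2) (by norm_num) |>.1 h2
  linarith [sub_eq_zero.1 this]


/-- Existence and uniqueness of the solution of the rational type B critical-point
system; the solution satisfies the rational Bethe Ansatz equations of type B. -/
theorem ratB_exists_unique_and_bethe
    (n K L : ℕ) (hn : 1 ≤ n)
    (α : ℝ) (hα : 0 < α) (ε : ℕ) (hε : ε = 0 ∨ ε = 1)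
    (a : Fin K → ℝ) (b : Fin L → ℝ)
    (ha : ∀ k, 0 < a k) (hb : ∀ l, 0 < b l)
    (μ : Fin n → ℤ) (hμ : ∀ j j' : Fin n, j < j' → μ j' < μ j)
    (hμpos : ∀ j, 0 < μ j) :
    (∃! ξ : Fin n → ℝ, ratBSysMu n K L α ε a b μ ξ) ∧
    (∀ ξ : Fin n → ℝ, ratBSysMu n K L α ε a b μ ξ →
      ∀ j : Fin n,
        Complex.exp (2 * Complex.I * (α : ℂ) * (ξ j : ℂ)) =
        (-1 : ℂ) ^ ε *
        (∏ k, (Complex.I * (a k : ℂ) + (ξ j : ℂ)) /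
              (Complex.I * (a k : ℂ) - (ξ j : ℂ))) *
        (∏ j' ∈ Finset.univ.erase j, ∏ l,
          ((Complex.I * (b l : ℂ) + (ξ j : ℂ) + (ξ j' : ℂ)) /
           (Complex.I * (b l : ℂ) - (ξ j : ℂ) - (ξ j' : ℂ))) *
          ((Complex.I * (b l : ℂ) + (ξ j : ℂ) - (ξ j' : ℂ)) /
           (Complex.I * (b l : ℂ) - (ξ j : ℂ) + (ξ j' : ℂ))))) := by
  set c : Fin n → ℝ := fun j => 2 * π * ((μ j : ℝ) + (ε : ℝ) / 2) with hcdef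
  constructor
  · -- existence and uniqueness
    obtain ⟨ξ0, hmin⟩ := VB_exists_min hn hα c ha hb
    have hsol : ratBSysMu n K L α ε a b μ ξ0 := by
      intro j
      have hloc : IsLocalMin (fun t => VB α c a b (Function.update ξ0 j t)) (ξ0 j) :=
        Filter.Eventually.of_forall fun t => by
          simpa [Function.update_eq_self] using hmin (Function.update ξ0 j t)
      have hz := hloc.hasDerivAt_eq_zero (VB_hasDerivAt α c ha hb ξ0 j)
      have hcj : c j = 2 * π * ((μ j : ℝ) + (ε : ℝ) / 2) := rfl
      rw [← hcj]
      linarith [hz]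
    refine ⟨ξ0, hsol, ?_⟩
    intro η hη
    exact ratB_unique_aux hα ha hb (fun j => hη j) (fun j => hsol j)
  · -- Bethe equations
    intro ξ hξ j
    have hre : (2 * α * ξ j : ℝ) = c j - (∑ k, vRat (a k) (ξ j))
        - (∑ j' ∈ Finset.univ.erase j, ∑ l,
          (vRat (b l) (ξ j' + ξ j) - vRat (b l) (ξ j' - ξ j))) := by
      have := hξ j
      rw [hcdef]
      linarith [this]
    have e1 : (2 * Complex.I * (α : ℂ) * (ξ j : ℂ))
        = ((2 * α * ξ j : ℝ) : ℂ) * Complex.I := by push_cast; ring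
    rw [e1, hre]
    simp only [hcdef]
    push_cast
    rw [show ((2 * (π:ℂ) * (((μ j : ℤ):ℂ) + ((ε:ℕ):ℂ) / 2))
        - (∑ k, ((vRat (a k) (ξ j) : ℝ) : ℂ))
        - (∑ j' ∈ Finset.univ.erase j, ∑ l,
          (((vRat (b l) (ξ j' + ξ j) : ℝ):ℂ) - ((vRat (b l) (ξ j' - ξ j) : ℝ):ℂ)))) * Complex.I
      = (2 * (π:ℂ) * (((μ j : ℤ):ℂ) + ((ε:ℕ):ℂ) / 2)) * Complex.I
        + (-(∑ k, ((vRat (a k) (ξ j) : ℝ):ℂ))) * Complex.I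
        + (-(∑ j' ∈ Finset.univ.erase j, ∑ l,
          (((vRat (b l) (ξ j' + ξ j) : ℝ):ℂ) - ((vRat (b l) (ξ j' - ξ j) : ℝ):ℂ)))) * Complex.I
      from by ring]
    rw [Complex.exp_add, Complex.exp_add]
    have f1 : Complex.exp ((2 * (π:ℂ) * (((μ j : ℤ):ℂ) + ((ε:ℕ):ℂ) / 2)) * Complex.I)
        = (-1 : ℂ) ^ ε := by
      rw [show (2 * (π:ℂ) * (((μ j : ℤ):ℂ) + ((ε:ℕ):ℂ) / 2)) * Complex.I
          = ((μ j : ℤ) : ℂ) * (2 * (π:ℂ) * Complex.I) + ((ε:ℕ):ℂ) * ((π:ℂ) * Complex.I) from by push_cast; ring]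
      rw [Complex.exp_add, Complex.exp_int_mul_two_pi_mul_I, one_mul,
        Complex.exp_nat_mul, Complex.exp_pi_mul_I]
    have f2 : Complex.exp ((-(∑ k, ((vRat (a k) (ξ j) : ℝ):ℂ))) * Complex.I)
        = ∏ k, (Complex.I * (a k : ℂ) + (ξ j : ℂ)) / (Complex.I * (a k : ℂ) - (ξ j : ℂ)) := by
      rw [show (-(∑ k, ((vRat (a k) (ξ j) : ℝ):ℂ))) * Complex.I
          = ∑ k, (-((vRat (a k) (ξ j) : ℝ):ℂ)) * Complex.I from by
        rw [← Finset.sum_mul, ← Finset.sum_neg_distrib]]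
      rw [Complex.exp_sum]
      apply Finset.prod_congr rfl
      intro k _
      exact exp_neg_vRat (ha k) (ξ j)
    have f3 : Complex.exp ((-(∑ j' ∈ Finset.univ.erase j, ∑ l,
          (((vRat (b l) (ξ j' + ξ j) : ℝ):ℂ) - ((vRat (b l) (ξ j' - ξ j) : ℝ):ℂ)))) * Complex.I)
        = ∏ j' ∈ Finset.univ.erase j, ∏ l,
          ((Complex.I * (b l : ℂ) + (ξ j : ℂ) + (ξ j' : ℂ)) /
           (Complex.I * (b l : ℂ) - (ξ j : ℂ) - (ξ j' : ℂ))) *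
          ((Complex.I * (b l : ℂ) + (ξ j : ℂ) - (ξ j' : ℂ)) /
           (Complex.I * (b l : ℂ) - (ξ j : ℂ) + (ξ j' : ℂ))) := by
      rw [show (-(∑ j' ∈ Finset.univ.erase j, ∑ l,
          (((vRat (b l) (ξ j' + ξ j) : ℝ):ℂ) - ((vRat (b l) (ξ j' - ξ j) : ℝ):ℂ)))) * Complex.I
          = ∑ j' ∈ Finset.univ.erase j, ∑ l,
            ((-(vRat (b l) (ξ j + ξ j') : ℝ) : ℂ) * Complex.I
              + (-(vRat (b l) (ξ j - ξ j') : ℝ) : ℂ) * Complex.I) from ?_]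
      · rw [Complex.exp_sum]
        apply Finset.prod_congr rfl
        intro j' _
        rw [Complex.exp_sum]
        apply Finset.prod_congr rfl
        intro l _
        rw [Complex.exp_add]
        have g1 := exp_neg_vRat (hb l) (ξ j + ξ j')
        have g2 := exp_neg_vRat (hb l) (ξ j - ξ j')
        push_cast at g1 g2 ⊢
        rw [g1, g2]
        ring_nf
      · simp only [← Finset.sum_neg_distrib]
        rw [Finset.sum_mul]
        apply Finset.sum_congr rfl
        intro j' _
        rw [Finset.sum_mul]
        apply Finset.sum_congr rfl
        intro l _
        rw [add_comm (ξ j) (ξ j'), show ξ j - ξ j' = -(ξ j' - ξ j) by ring, vRat_odd]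
        push_cast
        ring
    rw [f1, f2, f3, mul_assoc]
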